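/- arXiv:2312.00002 — 8 statements merged into one kernel-verified Lean document; each statement's English description precedes it below -/
import Mathlib

section
/- Let G be a topological group with identity e_G and H a topological group. If π : G → H is a (not necessarily continuous) group homomorphism such that there is a neighborhood U of e_G with closure(π(U)) compact in H, then the set DG(π) = ⋂_{U ∈ 𝒰} closure(π(U)), where 𝒰 is the neighborhood filter of e_G, is a subgroup of H. -/
open scoped Pointwise


/-- The discontinuity group of a relatively compact (not necessarily continuous)
homomorphism `π : G → H` is a subgroup of `H`. -/
theorem stmt0 {G H : Type*} [Group G] [TopologicalSpace G] [IsTopologicalGroup G]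
    [Group H] [TopologicalSpace H] [IsTopologicalGroup H]
    (π : G →* H)
    (hrc : ∃ U ∈ nhds (1 : G), IsCompact (closure (π '' U))) :
    ∃ S : Subgroup H, (S : Set H) = ⋂ U ∈ nhds (1 : G), closure (π '' U) := by
  refine ⟨⟨⟨⟨⋂ U ∈ nhds (1 : G), closure (π '' U), ?_⟩, ?_⟩, ?_⟩, rfl⟩
  · -- mul_mem
    rintro a b ha hb
    simp only [Set.mem_iInter] at ha hb ⊢
    intro U hU
    obtain ⟨V, hV, hVU⟩ := exists_nhds_one_split hU
    have hVn : V ∈ nhds (1 : G) := hV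
    have h1 : a * b ∈ closure (π '' V * π '' V) :=
      map_mem_closure₂ continuous_mul (ha V hVn) (hb V hVn)
        (fun x hx y hy => Set.mul_mem_mul hx hy)
    refine closure_mono ?_ h1
    rintro _ ⟨_, ⟨x, hx, rfl⟩, _, ⟨y, hy, rfl⟩, rfl⟩
    exact ⟨x * y, hVU x hx y hy, map_mul π x y⟩
  · -- one_mem
    simp only [Set.mem_iInter]
    intro U hU
    exact subset_closure ⟨1, mem_of_mem_nhds hU, map_one π⟩
  · -- inv_mem
    intro a ha
    simp only [Set.mem_iInter] at ha ⊢
    intro U hU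
    have hUi : U⁻¹ ∈ nhds (1 : G) := inv_mem_nhds_one G hU
    have h1 : a⁻¹ ∈ (closure (π '' U⁻¹))⁻¹ := Set.inv_mem_inv.2 (ha _ hUi)
    rw [inv_closure] at h1
    refine closure_mono ?_ h1
    intro y hy
    obtain ⟨x, hx, hxy⟩ := Set.mem_inv.1 hy
    exact ⟨x⁻¹, hx, by rw [map_inv, hxy, inv_inv]⟩
end

section
/- Let G and H be topological groups and π : G → H a relatively compact homomorphism. Then DG(π) is a normal subgroup of the closed subgroup closure(π(G)) of H; that is, for every g ∈ G and every h ∈ closure(π(G)), conjugation by h maps DG(π) into itself. -/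
/-- The discontinuity group `DG(π)` is a normal subgroup of the closed subgroup
`closure (π(G))` of `H`: conjugation by any element of `closure (π(G))` maps
`DG(π)` into itself. -/
theorem stmt2 {G H : Type*} [Group G] [TopologicalSpace G] [IsTopologicalGroup G]
    [Group H] [TopologicalSpace H] [IsTopologicalGroup H] [T2Space H]
    (π : G →* H)
    (hrc : ∃ U ∈ nhds (1 : G), IsCompact (closure (π '' U))) :
    (∃ S : Subgroup H, (S : Set H) = ⋂ U ∈ nhds (1 : G), closure (π '' U)) ∧
    ∀ h ∈ closure (Set.range π), ∀ x ∈ ⋂ U ∈ nhds (1 : G), closure (π '' U),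
      h * x * h⁻¹ ∈ ⋂ U ∈ nhds (1 : G), closure (π '' U) := by
  set D : Set H := ⋂ U ∈ nhds (1 : G), closure (π '' U) with hDdef
  have hmemD : ∀ x : H, x ∈ D ↔ ∀ U ∈ nhds (1 : G), x ∈ closure (π '' U) := by
    intro x; simp [hDdef, Set.mem_iInter]
  have hone : (1 : H) ∈ D := by
    rw [hmemD]
    intro U hU
    exact subset_closure ⟨1, mem_of_mem_nhds hU, map_one π⟩
  have hmul : ∀ x ∈ D, ∀ y ∈ D, x * y ∈ D := by
    intro x hx y hy
    rw [hmemD] at *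
    intro U hU
    obtain ⟨V, hV, hVV⟩ := exists_nhds_one_split hU
    refine map_mem_closure₂ continuous_mul (hx V hV) (hy V hV) ?_
    rintro a ⟨v, hv, rfl⟩ b ⟨w, hw, rfl⟩
    exact ⟨v * w, hVV v hv w hw, map_mul π v w⟩
  have hinv : ∀ x ∈ D, x⁻¹ ∈ D := by
    intro x hx
    rw [hmemD] at *
    intro U hU
    have hV : (fun g : G => g⁻¹) ⁻¹' U ∈ nhds (1 : G) := by
      apply (continuous_inv (G := G)).continuousAt.preimage_mem_nhds
      simpa using hU
    refine map_mem_closure continuous_inv (hx _ hV) ?_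
    rintro a ⟨v, hv, rfl⟩
    exact ⟨v⁻¹, hv, map_inv π v⟩
  have hconj : ∀ g : G, ∀ x ∈ D, π g * x * (π g)⁻¹ ∈ D := by
    intro g x hx
    rw [hmemD] at *
    intro U hU
    have hcont : Continuous fun a : G => g * a * g⁻¹ :=
      (continuous_const.mul continuous_id).mul continuous_const
    have hV : (fun a : G => g * a * g⁻¹) ⁻¹' U ∈ nhds (1 : G) := by
      apply hcont.continuousAt.preimage_mem_nhds
      simpa using hU
    have hcont' : Continuous fun h : H => π g * h * (π g)⁻¹ :=
      (continuous_const.mul continuous_id).mul continuous_const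
    refine map_mem_closure (f := fun h : H => π g * h * (π g)⁻¹) hcont' (hx _ hV) ?_
    rintro a ⟨v, hv, rfl⟩
    exact ⟨g * v * g⁻¹, hv, by rw [map_mul, map_mul, map_inv]⟩
  have hDclosed : IsClosed D := by
    rw [hDdef]
    exact isClosed_biInter fun U hU => isClosed_closure
  refine ⟨⟨{ carrier := D, mul_mem' := fun ha hb => hmul _ ha _ hb,
             one_mem' := hone, inv_mem' := fun ha => hinv _ ha }, rfl⟩, ?_⟩
  intro h hh x hx
  have hcont : Continuous fun a : H => a * x * a⁻¹ :=
    (continuous_id.mul continuous_const).mul continuous_inv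
  have : h * x * h⁻¹ ∈ closure D := by
    refine map_mem_closure (f := fun a : H => a * x * a⁻¹) hcont hh ?_
    rintro a ⟨g, rfl⟩
    exact hconj g x hx
  rwa [hDclosed.closure_eq] at this
end

section
/- Let G and H be topological groups and π : G → H a relatively compact homomorphism. Then π is continuous if and only if DG(π) = {e_H}. -/
/-- A relatively compact homomorphism `π` is continuous if and only if its
discontinuity group is trivial. -/
theorem stmt3 {G H : Type*} [Group G] [TopologicalSpace G] [IsTopologicalGroup G]
    [Group H] [TopologicalSpace H] [IsTopologicalGroup H] [T2Space H]
    [LocallyCompactSpace H]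
    (π : G →* H)
    (hrc : ∃ U ∈ nhds (1 : G), IsCompact (closure (π '' U))) :
    Continuous π ↔ (⋂ U ∈ nhds (1 : G), closure (π '' U)) = {(1 : H)} := by
  constructor
  · intro hc
    apply subset_antisymm
    · intro x hx
      simp only [Set.mem_iInter] at hx
      by_contra hx1
      have hx1' : x ≠ 1 := hx1
      obtain ⟨W, hW, hWc, hWs⟩ :=
        exists_mem_nhds_isClosed_subset (x := (1 : H)) (s := ({x}ᶜ : Set H))
          ((isOpen_compl_singleton).mem_nhds (by simpa using hx1'.symm))
      have hU : π ⁻¹' W ∈ nhds (1 : G) :=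
        (hc.continuousAt (x := (1 : G))) (by simpa [map_one] using hW)
      have hsub : closure (π '' (π ⁻¹' W)) ⊆ W :=
        closure_minimal (Set.image_preimage_subset π W) hWc
      exact hWs (hsub (hx _ hU)) rfl
    · intro x hx
      simp only [Set.mem_singleton_iff] at hx
      subst hx
      simp only [Set.mem_iInter]
      intro U hU
      exact subset_closure ⟨1, mem_of_mem_nhds hU, map_one π⟩
  · intro hDG
    obtain ⟨U₀, hU₀, hK⟩ := hrc
    apply continuous_of_continuousAt_one π
    rw [ContinuousAt, map_one, Filter.tendsto_def]
    intro V hV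
    set K := closure (π '' U₀) with hKdef
    have h1V : (1 : H) ∈ interior V := mem_interior_iff_mem_nhds.mpr hV
    have hZ : ∀ i : {U : Set G // U ∈ nhds (1 : G)},
        IsClosed (closure (π '' i.1) ∩ (interior V)ᶜ) := fun i =>
      isClosed_closure.inter isOpen_interior.isClosed_compl
    have hempty : K ∩ ⋂ i : {U : Set G // U ∈ nhds (1 : G)},
        (closure (π '' i.1) ∩ (interior V)ᶜ) = ∅ := by
      ext x
      simp only [Set.mem_inter_iff, Set.mem_iInter, Set.mem_empty_iff_false, iff_false, not_and]
      intro _ hx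
      have hmem : x ∈ ⋂ U ∈ nhds (1 : G), closure (π '' U) := by
        simp only [Set.mem_iInter]
        intro U hU
        exact (hx ⟨U, hU⟩).1
      rw [hDG] at hmem
      have hnot : x ∉ interior V := (hx ⟨Set.univ, Filter.univ_mem⟩).2
      simp only [Set.mem_singleton_iff] at hmem
      subst hmem
      exact hnot h1V
    obtain ⟨t, ht⟩ := hK.elim_finite_subfamily_closed _ hZ hempty
    have hU : U₀ ∩ ⋂ i ∈ t, (i : {U : Set G // U ∈ nhds (1 : G)}).1 ∈ nhds (1 : G) :=
      Filter.inter_mem hU₀ ((Filter.biInter_finset_mem t).mpr fun i _ => i.2)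
    refine Filter.mem_of_superset hU ?_
    intro x hx
    by_contra hxv
    have hπK : π x ∈ K := subset_closure ⟨x, hx.1, rfl⟩
    have hmem : π x ∈ K ∩ ⋂ i ∈ t, (closure (π '' i.1) ∩ (interior V)ᶜ) := by
      refine ⟨hπK, ?_⟩
      simp only [Set.mem_iInter]
      intro i hi
      refine ⟨subset_closure ⟨x, ?_, rfl⟩, fun (h : π x ∈ interior V) => hxv (show x ∈ π ⁻¹' V from interior_subset (s := V) h)⟩
      exact Set.mem_iInter₂.mp hx.2 i hi
    rw [ht] at hmem
    exact hmem
end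

section
/- Let G and H be topological groups, G' the commutator subgroup of G (with the induced topology), and π : G → H a relatively compact homomorphism. Then the commutator subgroup of DG(π) is contained in DG(π|_{G'}), the discontinuity group of the restriction of π to G'. -/
/-- The commutator subgroup of the discontinuity group `DG(π)` is contained in
the discontinuity group of the restriction of `π` to the commutator subgroup
`G' = [G,G]` of `G` (with the induced topology). -/
theorem stmt5 {G H : Type*} [Group G] [TopologicalSpace G] [IsTopologicalGroup G]
    [Group H] [TopologicalSpace H] [IsTopologicalGroup H] [T2Space H]
    (π : G →* H)
    (hrc : ∃ U ∈ nhds (1 : G), IsCompact (closure (π '' U))) :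
    ((Subgroup.closure {z : H | ∃ x ∈ ⋂ U ∈ nhds (1 : G), closure (π '' U),
        ∃ y ∈ ⋂ U ∈ nhds (1 : G), closure (π '' U),
        z = x * y * x⁻¹ * y⁻¹} : Subgroup H) : Set H) ⊆
      ⋂ V ∈ nhds (1 : (commutator G)),
        closure ((fun v : commutator G => π v) '' V) := by
  classical
  set f : commutator G → H := fun v : commutator G => π v with hf
  set T : Set H := ⋂ V ∈ nhds (1 : (commutator G)), closure (f '' V) with hT
  have hmemT : ∀ {h : H}, h ∈ T ↔
      ∀ V ∈ nhds (1 : commutator G), h ∈ closure (f '' V) := by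
    intro h; simp [hT, Set.mem_iInter₂]
  -- T is the carrier of a subgroup of H
  have one_mem : (1 : H) ∈ T := by
    rw [hmemT]
    intro V hV
    exact subset_closure ⟨1, mem_of_mem_nhds hV, by simp [hf]⟩
  have mul_mem : ∀ {a b : H}, a ∈ T → b ∈ T → a * b ∈ T := by
    intro a b ha hb
    rw [hmemT] at ha hb ⊢
    intro V hV
    obtain ⟨W, hW, hWmul⟩ := exists_nhds_one_split hV
    refine map_mem_closure₂ (f := fun x y : H => x * y) continuous_mul
      (ha W hW) (hb W hW) ?_
    rintro _ ⟨v, hv, rfl⟩ _ ⟨w, hw, rfl⟩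
    exact ⟨v * w, hWmul v hv w hw, by simp [hf]⟩
  have inv_mem : ∀ {a : H}, a ∈ T → a⁻¹ ∈ T := by
    intro a ha
    rw [hmemT] at ha ⊢
    intro V hV
    have hVinv : V⁻¹ ∈ nhds (1 : commutator G) := by
      simpa using (continuous_inv.continuousAt (x := (1 : commutator G))).preimage_mem_nhds
        (by simpa using hV)
    refine map_mem_closure (f := fun x : H => x⁻¹) continuous_inv (ha V⁻¹ hVinv) ?_
    rintro _ ⟨v, hv, rfl⟩
    exact ⟨v⁻¹, by simpa using hv, by simp [hf]⟩
  set S : Subgroup H :=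
    { carrier := T
      one_mem' := one_mem
      mul_mem' := fun ha hb => mul_mem ha hb
      inv_mem' := fun ha => inv_mem ha } with hS
  have key : {z : H | ∃ x ∈ ⋂ U ∈ nhds (1 : G), closure (π '' U),
      ∃ y ∈ ⋂ U ∈ nhds (1 : G), closure (π '' U),
      z = x * y * x⁻¹ * y⁻¹} ⊆ (S : Set H) := by
    rintro z ⟨x, hx, y, hy, rfl⟩
    have hx' : ∀ U ∈ nhds (1 : G), x ∈ closure (π '' U) := by
      simpa [Set.mem_iInter₂] using hx
    have hy' : ∀ U ∈ nhds (1 : G), y ∈ closure (π '' U) := by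
      simpa [Set.mem_iInter₂] using hy
    show x * y * x⁻¹ * y⁻¹ ∈ T
    rw [hmemT]
    intro V hV
    obtain ⟨U, hU, hUV⟩ := (mem_nhds_subtype _ _ _).1 hV
    rw [show ((1 : commutator G) : G) = 1 from rfl] at hU
    obtain ⟨W₁, hW₁, hW₁mul⟩ := exists_nhds_one_split hU
    obtain ⟨W₂, hW₂, hW₂mul⟩ := exists_nhds_one_split hW₁
    set W : Set G := W₂ ∩ W₂⁻¹ with hW
    have hWnhds : W ∈ nhds (1 : G) := by
      refine Filter.inter_mem hW₂ ?_
      simpa using (continuous_inv.continuousAt (x := (1 : G))).preimage_mem_nhds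
        (by simpa using hW₂)
    have hcont : Continuous (Function.uncurry fun p q : H => p * q * p⁻¹ * q⁻¹) :=
      ((continuous_fst.mul continuous_snd).mul continuous_fst.inv).mul continuous_snd.inv
    refine map_mem_closure₂ (f := fun p q : H => p * q * p⁻¹ * q⁻¹)
      hcont (hx' W hWnhds) (hy' W hWnhds) ?_
    rintro _ ⟨a, ha, rfl⟩ _ ⟨b, hb, rfl⟩
    have habU : a * b * a⁻¹ * b⁻¹ ∈ U := by
      have h1 : a * b ∈ W₁ := hW₂mul a ha.1 b hb.1
      have h2 : a⁻¹ * b⁻¹ ∈ W₁ := hW₂mul a⁻¹ (by simpa using ha.2) b⁻¹ (by simpa using hb.2)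
      have := hW₁mul _ h1 _ h2
      simpa [mul_assoc] using this
    have habc : a * b * a⁻¹ * b⁻¹ ∈ commutator G := by
      have := Subgroup.commutator_mem_commutator (H₁ := (⊤ : Subgroup G))
        (H₂ := (⊤ : Subgroup G)) (Subgroup.mem_top a) (Subgroup.mem_top b)
      simpa [commutator, commutatorElement_def, mul_assoc] using this
    refine ⟨⟨a * b * a⁻¹ * b⁻¹, habc⟩, hUV habU, ?_⟩
    simp [hf]
  exact fun z hz => (Subgroup.closure_le S).2 key hz
end

section
/- Let G and H be topological groups, G' the commutator subgroup of G, and π : G → H a relatively compact homomorphism. Then the commutator subgroup DG(π)' of the discontinuity group is a normal subgroup of DG(π|_{G'}). -/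
open Set

/-- The discontinuity set of a homomorphism is a subgroup. -/
def DGsub {G H : Type*} [Group G] [TopologicalSpace G] [IsTopologicalGroup G]
    [Group H] [TopologicalSpace H] [IsTopologicalGroup H] (π : G →* H) : Subgroup H where
  carrier := ⋂ U ∈ nhds (1 : G), closure (π '' U)
  one_mem' := Set.mem_iInter₂.2 fun U hU =>
    subset_closure ⟨1, mem_of_mem_nhds hU, map_one π⟩
  mul_mem' := by
    intro a b ha hb
    refine Set.mem_iInter₂.2 fun U hU => ?_
    obtain ⟨W, _, hW1, hWU⟩ := exists_open_nhds_one_mul_subset hU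
    have hWn : W ∈ nhds (1 : G) := (by assumption : IsOpen W).mem_nhds hW1
    have ha' : a ∈ closure (π '' W) := Set.mem_iInter₂.1 ha W hWn
    have hb' : b ∈ closure (π '' W) := Set.mem_iInter₂.1 hb W hWn
    have hab : (a, b) ∈ closure ((π '' W) ×ˢ (π '' W)) := by
      rw [closure_prod_eq]; exact ⟨ha', hb'⟩
    have := image_closure_subset_closure_image (f := fun p : H × H => p.1 * p.2)
      continuous_mul (s := (π '' W) ×ˢ (π '' W)) ⟨(a, b), hab, rfl⟩
    refine closure_mono ?_ this
    rintro z ⟨⟨u, v⟩, ⟨⟨w1, hw1, rfl⟩, ⟨w2, hw2, rfl⟩⟩, rfl⟩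
    exact ⟨w1 * w2, hWU (Set.mul_mem_mul hw1 hw2), map_mul π w1 w2⟩
  inv_mem' := by
    intro a ha
    refine Set.mem_iInter₂.2 fun U hU => ?_
    have hUinv : U⁻¹ ∈ nhds (1 : G) := inv_mem_nhds_one G hU
    have ha' : a ∈ closure (π '' U⁻¹) := Set.mem_iInter₂.1 ha _ hUinv
    have := image_closure_subset_closure_image (f := fun z : H => z⁻¹)
      continuous_inv (s := π '' U⁻¹) ⟨a, ha', rfl⟩
    refine closure_mono ?_ this
    rintro z ⟨_, ⟨w, hw, rfl⟩, rfl⟩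
    exact ⟨w⁻¹, Set.mem_inv.1 hw, map_inv π w⟩

theorem comm_mem_DG_restrict {G H : Type*} [Group G] [TopologicalSpace G] [IsTopologicalGroup G]
    [Group H] [TopologicalSpace H] [IsTopologicalGroup H] (π : G →* H) {x y : H}
    (hx : x ∈ DGsub π) (hy : y ∈ DGsub π) :
    x * y * x⁻¹ * y⁻¹ ∈ DGsub (π.comp (commutator G).subtype) := by
  refine Set.mem_iInter₂.2 fun V hV => ?_
  -- extract an ambient neighborhood U
  rw [nhds_subtype] at hV
  obtain ⟨U, hU, hUV⟩ := Filter.mem_comap.1 hV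
  have hU1 : U ∈ nhds (1 : G) := hU
  -- find W with commutators landing in U
  have hc : Continuous fun p : G × G => p.1 * p.2 * p.1⁻¹ * p.2⁻¹ := by continuity
  have h11 : (fun p : G × G => p.1 * p.2 * p.1⁻¹ * p.2⁻¹) ⁻¹' U ∈ nhds ((1 : G), (1 : G)) := by
    refine hc.continuousAt.preimage_mem_nhds ?_
    simpa using hU1
  rw [nhds_prod_eq] at h11
  obtain ⟨W1, hW1, W2, hW2, hW⟩ := Filter.mem_prod_iff.1 h11
  set W := W1 ∩ W2 with hWdef
  have hWn : W ∈ nhds (1 : G) := Filter.inter_mem hW1 hW2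
  have hcomm : ∀ a ∈ W, ∀ b ∈ W, a * b * a⁻¹ * b⁻¹ ∈ U := fun a ha b hb =>
    hW (Set.mk_mem_prod ha.1 hb.2)
  have hx' : x ∈ closure (π '' W) := Set.mem_iInter₂.1 hx W hWn
  have hy' : y ∈ closure (π '' W) := Set.mem_iInter₂.1 hy W hWn
  have hxy : (x, y) ∈ closure ((π '' W) ×ˢ (π '' W)) := by
    rw [closure_prod_eq]; exact ⟨hx', hy'⟩
  have hcH : Continuous fun p : H × H => p.1 * p.2 * p.1⁻¹ * p.2⁻¹ := by continuity
  have := image_closure_subset_closure_image (f := fun p : H × H => p.1 * p.2 * p.1⁻¹ * p.2⁻¹)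
    hcH (s := (π '' W) ×ˢ (π '' W)) ⟨(x, y), hxy, rfl⟩
  refine closure_mono ?_ this
  rintro z ⟨⟨u, v⟩, ⟨⟨a, ha, rfl⟩, ⟨b, hb, rfl⟩⟩, rfl⟩
  have hgU : a * b * a⁻¹ * b⁻¹ ∈ U := hcomm a ha b hb
  have hgG' : a * b * a⁻¹ * b⁻¹ ∈ commutator G := by
    have := Subgroup.commutator_mem_commutator (Subgroup.mem_top a) (Subgroup.mem_top b)
    rwa [commutatorElement_def] at this
  refine ⟨⟨a * b * a⁻¹ * b⁻¹, hgG'⟩, hUV hgU, ?_⟩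
  simp [MonoidHom.comp_apply, map_mul, map_inv]

theorem DG_restrict_le {G H : Type*} [Group G] [TopologicalSpace G] [IsTopologicalGroup G]
    [Group H] [TopologicalSpace H] [IsTopologicalGroup H] (π : G →* H) :
    DGsub (π.comp (commutator G).subtype) ≤ DGsub π := by
  intro h hh
  refine Set.mem_iInter₂.2 fun U hU => ?_
  have hV : (Subtype.val ⁻¹' U : Set (commutator G)) ∈ nhds (1 : commutator G) := by
    rw [nhds_subtype]
    exact Filter.preimage_mem_comap hU
  have hh' : h ∈ closure ((π.comp (commutator G).subtype) '' (Subtype.val ⁻¹' U)) :=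
    Set.mem_iInter₂.1 hh _ hV
  refine closure_mono ?_ hh'
  rintro z ⟨v, hv, rfl⟩
  exact ⟨v, hv, rfl⟩

/-- The commutator subgroup `DG(π)'` of the discontinuity group of a relatively
compact homomorphism `π` is a normal subgroup of the discontinuity group
`DG(π|_{G'})` of the restriction of `π` to the commutator subgroup of `G`. -/
theorem stmt6 {G H : Type*} [Group G] [TopologicalSpace G] [IsTopologicalGroup G]
    [Group H] [TopologicalSpace H] [IsTopologicalGroup H] [T2Space H]
    (π : G →* H)
    (hrc : ∃ U ∈ nhds (1 : G), IsCompact (closure (π '' U)))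
    (DGcomm : Subgroup H)
    (hDGcomm : DGcomm = Subgroup.closure
      {z : H | ∃ x ∈ ⋂ U ∈ nhds (1 : G), closure (π '' U),
        ∃ y ∈ ⋂ U ∈ nhds (1 : G), closure (π '' U), z = x * y * x⁻¹ * y⁻¹}) :
    ((DGcomm : Set H) ⊆
      ⋂ V ∈ nhds (1 : (commutator G)),
        closure ((fun v : commutator G => π v) '' V)) ∧
    ∀ h ∈ ⋂ V ∈ nhds (1 : (commutator G)),
        closure ((fun v : commutator G => π v) '' V),
      ∀ x ∈ DGcomm, h * x * h⁻¹ ∈ DGcomm := by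
  have hset : (⋂ V ∈ nhds (1 : (commutator G)),
      closure ((fun v : commutator G => π v) '' V)) =
      ((DGsub (π.comp (commutator G).subtype) : Subgroup H) : Set H) := rfl
  constructor
  · rw [hDGcomm, hset]
    rw [show ((Subgroup.closure _ : Subgroup H) : Set H) ⊆
        ((DGsub (π.comp (commutator G).subtype) : Subgroup H) : Set H) ↔
        Subgroup.closure _ ≤ DGsub (π.comp (commutator G).subtype) from Iff.rfl]
    rw [Subgroup.closure_le]
    rintro z ⟨x, hx, y, hy, rfl⟩
    exact comm_mem_DG_restrict π hx hy
  · intro h hh x hx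
    rw [hset] at hh
    have hhD : h ∈ DGsub π := DG_restrict_le π hh
    rw [hDGcomm] at hx ⊢
    refine Subgroup.closure_induction ?_ ?_ ?_ ?_ hx
    · rintro z ⟨a, ha, b, hb, rfl⟩
      have ha' : h * a * h⁻¹ ∈ DGsub π := mul_mem (mul_mem hhD ha) (inv_mem hhD)
      have hb' : h * b * h⁻¹ ∈ DGsub π := mul_mem (mul_mem hhD hb) (inv_mem hhD)
      have : h * (a * b * a⁻¹ * b⁻¹) * h⁻¹ =
          (h * a * h⁻¹) * (h * b * h⁻¹) * (h * a * h⁻¹)⁻¹ * (h * b * h⁻¹)⁻¹ := by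
        group
      rw [this]
      exact Subgroup.subset_closure ⟨_, ha', _, hb', rfl⟩
    · simpa using one_mem _
    · intro a b _ _ pa pb
      have : h * (a * b) * h⁻¹ = (h * a * h⁻¹) * (h * b * h⁻¹) := by group
      rw [this]; exact mul_mem pa pb
    · intro a _ pa
      have : h * a⁻¹ * h⁻¹ = (h * a * h⁻¹)⁻¹ := by group
      rw [this]; exact inv_mem pa
end

section
/- Let G, H, K be topological groups, π : G → H a relatively compact homomorphism, and φ : H → K a continuous group homomorphism whose restriction to compact sets is proper (e.g., φ continuous with H locally compact and K Hausdorff). If φ is a closed map on the compact closure of π(U₀) for some identity neighborhood U₀, then DG(φ ∘ π) ⊇ φ(DG(π)); moreover if φ has compact kernel then DG(φ ∘ π) = φ(DG(π)) provided closure(π(U)) is compact for all sufficiently small U. -/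
/-- For a relatively compact homomorphism `π : G → H` and a continuous
homomorphism `φ : H → K` that is a closed map on the compact closure of the
image of some identity neighborhood, one has `φ(DG(π)) ⊆ DG(φ ∘ π)`; moreover,
if `φ` has compact kernel and `closure (π '' U)` is compact for all identity
neighborhoods `U`, then `DG(φ ∘ π) = φ(DG(π))`. -/
theorem stmt8 {G H K : Type*} [Group G] [TopologicalSpace G] [IsTopologicalGroup G]
    [Group H] [TopologicalSpace H] [IsTopologicalGroup H] [T2Space H]
    [Group K] [TopologicalSpace K] [IsTopologicalGroup K] [T2Space K]
    (π : G →* H) (φ : H →* K) (hφ : Continuous φ)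
    (U₀ : Set G) (hU₀ : U₀ ∈ nhds (1 : G)) (hc : IsCompact (closure (π '' U₀)))
    (hclosed : ∀ C ⊆ closure (π '' U₀), IsClosed C → IsClosed (φ '' C)) :
    (φ '' ⋂ U ∈ nhds (1 : G), closure (π '' U)) ⊆
      (⋂ U ∈ nhds (1 : G), closure ((φ ∘ π) '' U)) ∧
    (IsCompact ((φ.ker : Set H)) →
      (∀ U ∈ nhds (1 : G), IsCompact (closure (π '' U))) →
      (⋂ U ∈ nhds (1 : G), closure ((φ ∘ π) '' U)) =
        φ '' ⋂ U ∈ nhds (1 : G), closure (π '' U)) := by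
  have part1 : (φ '' ⋂ U ∈ nhds (1 : G), closure (π '' U)) ⊆
      ⋂ U ∈ nhds (1 : G), closure ((φ ∘ π) '' U) := by
    rintro k ⟨h, hh, rfl⟩
    simp only [Set.mem_iInter] at hh ⊢
    intro U hU
    have h1 : φ h ∈ φ '' closure (π '' U) := ⟨h, hh U hU, rfl⟩
    have h2 := (image_closure_subset_closure_image hφ) h1
    rw [← Set.image_comp] at h2; exact h2
  refine ⟨part1, fun _hker hall => ?_⟩
  refine Set.Subset.antisymm ?_ part1
  intro k hk
  simp only [Set.mem_iInter] at hk
  haveI : Nonempty {U : Set G // U ∈ nhds (1 : G)} := ⟨⟨U₀, hU₀⟩⟩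
  set F : {U : Set G // U ∈ nhds (1 : G)} → Set H :=
    fun i => closure (π '' (i.1 ∩ U₀)) ∩ φ ⁻¹' {k} with hF
  have hcomp : ∀ i, IsCompact (F i) := fun i =>
    (hall _ (Filter.inter_mem i.2 hU₀)).inter_right
      (IsClosed.preimage hφ isClosed_singleton)
  have hclosedF : ∀ i, IsClosed (F i) := fun i =>
    isClosed_closure.inter (IsClosed.preimage hφ isClosed_singleton)
  have hne : ∀ i, (F i).Nonempty := by
    intro i
    have hmem : k ∈ closure ((φ ∘ π) '' (i.1 ∩ U₀)) := hk _ (Filter.inter_mem i.2 hU₀)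
    have hsub : closure ((φ ∘ π) '' (i.1 ∩ U₀)) ⊆ φ '' closure (π '' (i.1 ∩ U₀)) := by
      apply closure_minimal
      · rw [Set.image_comp]; exact Set.image_mono subset_closure
      · exact ((hall _ (Filter.inter_mem i.2 hU₀)).image hφ).isClosed
    obtain ⟨h, hh, rfl⟩ := hsub hmem
    exact ⟨h, hh, rfl⟩
  have hdir : Directed (· ⊇ ·) F := by
    intro i j
    refine ⟨⟨i.1 ∩ j.1, Filter.inter_mem i.2 j.2⟩, ?_, ?_⟩
    · exact Set.inter_subset_inter_left _
        (closure_mono (Set.image_mono (fun x hx => ⟨hx.1.1, hx.2⟩)))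
    · exact Set.inter_subset_inter_left _
        (closure_mono (Set.image_mono (fun x hx => ⟨hx.1.2, hx.2⟩)))
  obtain ⟨h, hh⟩ :=
    IsCompact.nonempty_iInter_of_directed_nonempty_isCompact_isClosed F hdir hne hcomp hclosedF
  simp only [Set.mem_iInter, hF, Set.mem_inter_iff, Set.mem_preimage,
    Set.mem_singleton_iff] at hh
  refine ⟨h, ?_, (hh ⟨U₀, hU₀⟩).2⟩
  simp only [Set.mem_iInter]
  intro U hU
  exact closure_mono (Set.image_mono Set.inter_subset_left) (hh ⟨U, hU⟩).1
end

section
/- Let G be a connected topological group and π : G → H a relatively compact homomorphism into a Hausdorff topological group H. If V is any open set in H containing DG(π), then there exists a neighborhood U of e_G such that closure(π(U)) ⊆ V; i.e., the filter basis {closure(π(U)) : U ∈ 𝒰} converges to DG(π). -/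
/-- For a relatively compact homomorphism `π` of a connected topological group
`G` into a Hausdorff topological group `H`, every open set containing `DG(π)`
contains `closure (π '' U)` for some identity neighborhood `U`; i.e. the filter
basis `{closure (π '' U)}` converges to `DG(π)`. -/
theorem stmt13 {G H : Type*} [Group G] [TopologicalSpace G] [IsTopologicalGroup G]
    [ConnectedSpace G]
    [Group H] [TopologicalSpace H] [IsTopologicalGroup H] [T2Space H]
    (π : G →* H)
    (hrc : ∃ U ∈ nhds (1 : G), IsCompact (closure (π '' U))) :
    ∀ V : Set H, IsOpen V → (⋂ U ∈ nhds (1 : G), closure (π '' U)) ⊆ V →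
      ∃ U ∈ nhds (1 : G), closure (π '' U) ⊆ V := by
  rintro V hV hsub
  obtain ⟨U₀, hU₀, hK⟩ := hrc
  set Z : {U : Set G // U ∈ nhds (1 : G)} → Set H :=
    fun U => closure (π '' U.1) ∩ Vᶜ with hZ
  have hZclosed : ∀ U, IsClosed (Z U) := fun U =>
    isClosed_closure.inter hV.isClosed_compl
  have hempty : closure (π '' U₀) ∩ ⋂ U, Z U = ∅ := by
    rw [Set.eq_empty_iff_forall_notMem]
    rintro x ⟨hx0, hx⟩
    simp only [Set.mem_iInter, hZ, Set.mem_inter_iff, Set.mem_compl_iff] at hx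
    have hxV : x ∈ V := by
      apply hsub
      simp only [Set.mem_iInter]
      exact fun U hU => (hx ⟨U, hU⟩).1
    exact (hx ⟨U₀, hU₀⟩).2 hxV
  obtain ⟨t, ht⟩ := hK.elim_finite_subfamily_closed Z hZclosed hempty
  refine ⟨U₀ ∩ ⋂ U ∈ t, U.1, ?_, ?_⟩
  · exact Filter.inter_mem hU₀ ((Filter.biInter_finset_mem t).2 fun U _ => U.2)
  · intro x hx
    by_contra hxV
    have hx0 : x ∈ closure (π '' U₀) :=
      closure_mono (Set.image_mono Set.inter_subset_left) hx
    have hmem : x ∈ closure (π '' U₀) ∩ ⋂ U ∈ t, Z U := by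
      refine ⟨hx0, ?_⟩
      simp only [Set.mem_iInter]
      intro U hU
      refine ⟨?_, hxV⟩
      refine closure_mono (Set.image_mono ?_) hx
      exact Set.inter_subset_right.trans (Set.biInter_subset_of_mem hU)
    rw [ht] at hmem
    exact hmem
end

section
/- Let G be a topological group, N a normal subgroup of G with the induced topology, and π : G → H a relatively compact homomorphism into a Hausdorff topological group H. Then DG(π|_N) is a normal subgroup of DG(π), where π|_N is the restriction of π to N. -/
open scoped Pointwise

private theorem aux_closure_mul {H : Type*} [Group H] [TopologicalSpace H]
    [IsTopologicalGroup H] (s t : Set H) :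
    closure s * closure t ⊆ closure (s * t) := by
  rintro _ ⟨a, ha, b, hb, rfl⟩
  have h1 : (a, b) ∈ closure (s ×ˢ t) := by
    rw [closure_prod_eq]; exact ⟨ha, hb⟩
  have h2 := image_closure_subset_closure_image
    (f := fun x : H × H => x.1 * x.2) (s := s ×ˢ t) (by fun_prop)
  have := h2 ⟨(a, b), h1, rfl⟩
  rwa [Set.image_mul_prod] at this

/-- For a normal subgroup `N` of `G` (with the induced topology) and a
relatively compact homomorphism `π : G → H`, the discontinuity group of the
restriction `π|_N` is a normal subgroup of `DG(π)`. -/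
theorem stmt15 {G H : Type*} [Group G] [TopologicalSpace G] [IsTopologicalGroup G]
    [Group H] [TopologicalSpace H] [IsTopologicalGroup H] [T2Space H]
    (N : Subgroup G) [N.Normal]
    (π : G →* H)
    (hrc : ∃ U ∈ nhds (1 : G), IsCompact (closure (π '' U))) :
    ((⋂ V ∈ nhds (1 : N), closure ((fun v : N => π v) '' V)) ⊆
      ⋂ U ∈ nhds (1 : G), closure (π '' U)) ∧
    (∃ S : Subgroup H,
      (S : Set H) = ⋂ V ∈ nhds (1 : N), closure ((fun v : N => π v) '' V)) ∧
    ∀ h ∈ ⋂ U ∈ nhds (1 : G), closure (π '' U),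
      ∀ x ∈ ⋂ V ∈ nhds (1 : N), closure ((fun v : N => π v) '' V),
        h * x * h⁻¹ ∈ ⋂ V ∈ nhds (1 : N), closure ((fun v : N => π v) '' V) := by
  classical
  set f : N →* H := π.comp N.subtype with hfdef
  have hfv : (fun v : N => π (v : G)) = f := rfl
  set D : Set H := ⋂ V ∈ nhds (1 : N), closure ((fun v : N => π v) '' V) with hD
  have memD : ∀ x : H, x ∈ D ↔ ∀ V ∈ nhds (1 : N), x ∈ closure (f '' V) := by
    intro x
    simp only [hD, Set.mem_iInter, hfv]
  -- Part 1
  have part1 : D ⊆ ⋂ U ∈ nhds (1 : G), closure (π '' U) := by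
    intro x hx
    rw [Set.mem_iInter₂]
    intro U hU
    have hV : (Subtype.val ⁻¹' U : Set N) ∈ nhds (1 : N) :=
      continuous_subtype_val.continuousAt.preimage_mem_nhds (by simpa using hU)
    have hx' := (memD x).1 hx _ hV
    refine closure_mono ?_ hx'
    rintro _ ⟨v, hv, rfl⟩
    exact ⟨v, hv, rfl⟩
  -- one
  have one_memD : (1 : H) ∈ D := by
    rw [memD]
    intro V hV
    exact subset_closure ⟨1, mem_of_mem_nhds hV, f.map_one⟩
  -- mul
  have mul_memD : ∀ x y : H, x ∈ D → y ∈ D → x * y ∈ D := by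
    intro x y hx hy
    rw [memD] at hx hy ⊢
    intro V hV
    obtain ⟨W, hWopen, hW1, hWW⟩ := exists_open_nhds_one_mul_subset hV
    have hWn : W ∈ nhds (1 : N) := hWopen.mem_nhds hW1
    have hmul : x * y ∈ closure (f '' W) * closure (f '' W) :=
      Set.mul_mem_mul (hx _ hWn) (hy _ hWn)
    have := aux_closure_mul (f '' W) (f '' W) hmul
    rw [← Set.image_mul f] at this
    exact closure_mono (Set.image_mono hWW) this
  -- inv
  have inv_memD : ∀ x : H, x ∈ D → x⁻¹ ∈ D := by
    intro x hx
    rw [memD] at hx ⊢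
    intro V hV
    have hVi : (V⁻¹ : Set N) ∈ nhds (1 : N) := inv_mem_nhds_one N hV
    have hx' := hx _ hVi
    have : x⁻¹ ∈ (closure (f '' V⁻¹))⁻¹ := by
      simpa using Set.inv_mem_inv.2 hx'
    rw [inv_closure] at this
    refine closure_mono ?_ this
    rintro z hz
    rw [Set.mem_inv] at hz
    obtain ⟨v, hv, hfz⟩ := hz
    exact ⟨v⁻¹, Set.mem_inv.1 hv, by rw [map_inv, hfz, inv_inv]⟩
  -- conjugation
  have conj_mem : ∀ h ∈ ⋂ U ∈ nhds (1 : G), closure (π '' U), ∀ x ∈ D,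
      h * x * h⁻¹ ∈ D := by
    intro h hh x hx
    rw [memD] at hx ⊢
    intro V hV
    set C := closure (f '' V) with hC
    -- step 1: for each g : G, π g * x * (π g)⁻¹ ∈ C
    have step1 : ∀ g : G, π g * x * (π g)⁻¹ ∈ C := by
      intro g
      -- conjugation map on N
      have hnorm : ∀ n : N, g * (n : G) * g⁻¹ ∈ N := fun n =>
        Subgroup.Normal.conj_mem ‹N.Normal› n n.2 g
      set c : N → N := fun n => ⟨g * (n : G) * g⁻¹, hnorm n⟩ with hc
      have hc_cont : Continuous c := by
        apply Continuous.subtype_mk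
        fun_prop
      have hc1 : c 1 = 1 := by
        simp [hc]
      have hVg : c ⁻¹' V ∈ nhds (1 : N) :=
        hc_cont.continuousAt.preimage_mem_nhds (by rw [hc1]; exact hV)
      have hx' := hx _ hVg
      -- map by conjugation by π g in H
      have hφ : Continuous (fun y : H => π g * y * (π g)⁻¹) := by fun_prop
      have h2 := image_closure_subset_closure_image hφ
        (s := f '' (c ⁻¹' V)) ⟨x, hx', rfl⟩
      refine closure_mono ?_ h2
      rintro _ ⟨_, ⟨n, hn, rfl⟩, rfl⟩
      refine ⟨c n, hn, ?_⟩
      show π ((c n : G)) = π g * π (n : G) * (π g)⁻¹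
      simp [hc, map_mul]
    -- step 2: h ∈ closure (range π)
    have hh' : h ∈ closure (π '' Set.univ) := by
      have := Set.mem_iInter₂.1 hh Set.univ Filter.univ_mem
      exact this
    have hψ : Continuous (fun y : H => y * x * y⁻¹) := by fun_prop
    have h3 := image_closure_subset_closure_image hψ
      (s := π '' Set.univ) ⟨h, hh', rfl⟩
    have h4 : (fun y : H => y * x * y⁻¹) '' (π '' Set.univ) ⊆ C := by
      rintro _ ⟨_, ⟨g, -, rfl⟩, rfl⟩
      exact step1 g
    have : h * x * h⁻¹ ∈ closure C := closure_mono h4 h3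
    rwa [closure_closure] at this
  refine ⟨part1, ⟨⟨⟨⟨D, fun {a b} ha hb => mul_memD a b ha hb⟩, one_memD⟩,
    fun {a} ha => inv_memD a ha⟩, rfl⟩, conj_mem⟩
end
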